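/- Let V be a finite-dimensional real inner product space, let σ ⊆ V be a closed convex cone containing 0, and let f : V → ℝ be a function that on σ is nonnegative, positively homogeneous (f(t•v) = t·f(v) for all t ≥ 0 and v ∈ σ), subadditive (f(v+w) ≤ f(v) + f(w) for all v, w ∈ σ), and lower semicontinuous on σ. Set ∇_f := {v ∈ σ | f(v) ≤ 1} and let Δ_f := {u ∈ V | ⟨u, w⟩ ≥ −1 for all w ∈ ∇_f} be its polar. Then for every v ∈ σ, the infimum of {⟨u, v⟩ | u ∈ Δ_f} equals −f(v). -/

import Mathlib

open RealInnerProductSpace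

/-- **Lemma 4.6 (pwl<->polyhedra).** Let `f` be nonnegative, positively homogeneous,
subadditive and lower semicontinuous on a closed convex cone `σ ∋ 0`. With
`∇_f = {v ∈ σ | f v ≤ 1}` and `Δ_f` its polar, one has `pwl(Δ_f) = -f` on `σ`. -/
theorem pwl_of_dual_of_sublevel_eq_neg
    {V : Type*} [NormedAddCommGroup V] [InnerProductSpace ℝ V]
    [FiniteDimensional ℝ V]
    (σ : Set V) (hσcl : IsClosed σ) (hσconv : Convex ℝ σ) (h0 : (0 : V) ∈ σ)
    (hσcone : ∀ t : ℝ, 0 ≤ t → ∀ v ∈ σ, t • v ∈ σ)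
    (f : V → ℝ)
    (hnn : ∀ v ∈ σ, 0 ≤ f v)
    (hhom : ∀ t : ℝ, 0 ≤ t → ∀ v ∈ σ, f (t • v) = t * f v)
    (hsub : ∀ v ∈ σ, ∀ w ∈ σ, f (v + w) ≤ f v + f w)
    (hlsc : LowerSemicontinuousOn f σ) :
    ∀ v ∈ σ,
      sInf ((fun u => ⟪u, v⟫) ''
          {u : V | ∀ w ∈ {x ∈ σ | f x ≤ 1}, ⟪u, w⟫ ≥ -1}) = -f v := by
  intro v hv
  set S : Set V := {x ∈ σ | f x ≤ 1} with hS
  set Δ : Set V := {u : V | ∀ w ∈ S, ⟪u, w⟫ ≥ -1} with hΔ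
  have hf0 : f 0 = 0 := by
    have := hhom 0 le_rfl 0 h0
    simpa using this
  have h0S : (0 : V) ∈ S := ⟨h0, by rw [hf0]; norm_num⟩
  have h0Δ : (0 : V) ∈ Δ := by
    intro w hw
    simp [inner_zero_left]
  -- lower bound
  have hlb : ∀ u ∈ Δ, -f v ≤ ⟪u, v⟫ := by
    intro u hu
    rcases eq_or_lt_of_le (hnn v hv) with h | h
    · -- f v = 0
      rw [← h, neg_zero]
      by_contra hneg
      push_neg at hneg
      set t : ℝ := 2 / (-⟪u, v⟫) with ht
      have hpos : 0 < -⟪u, v⟫ := by linarith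
      have htpos : 0 < t := by positivity
      have htS : t • v ∈ S := by
        refine ⟨hσcone t htpos.le v hv, ?_⟩
        rw [hhom t htpos.le v hv, ← h]
        norm_num
      have := hu _ htS
      rw [real_inner_smul_right] at this
      have ht2 : t * ⟪u, v⟫ = -2 := by
        rw [ht, div_mul_eq_mul_div, div_eq_iff hpos.ne']; ring
      linarith
    · -- f v > 0
      have hw : (f v)⁻¹ • v ∈ S := by
        refine ⟨hσcone _ (by positivity) v hv, ?_⟩
        rw [hhom _ (by positivity) v hv]
        rw [inv_mul_cancel₀ (ne_of_gt h)]
      have h1 := hu _ hw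
      rw [real_inner_smul_right] at h1
      have h3 := mul_le_mul_of_nonneg_left h1 h.le
      rw [← mul_assoc, mul_inv_cancel₀ (ne_of_gt h), one_mul] at h3
      linarith
  have hne : ((fun u => ⟪u, v⟫) '' Δ).Nonempty := ⟨⟪(0:V), v⟫, ⟨0, h0Δ, rfl⟩⟩
  have hbdd : BddBelow ((fun u => ⟪u, v⟫) '' Δ) := by
    refine ⟨-f v, ?_⟩
    rintro x ⟨u, hu, rfl⟩
    exact hlb u hu
  refine le_antisymm ?_ (le_csInf hne (by rintro x ⟨u, hu, rfl⟩; exact hlb u hu))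
  -- upper bound: sInf ≤ -f v
  rcases eq_or_lt_of_le (hnn v hv) with h | hfv
  · have : sInf ((fun u => ⟪u, v⟫) '' Δ) ≤ ⟪(0:V), v⟫ :=
      csInf_le hbdd ⟨0, h0Δ, rfl⟩
    rw [inner_zero_left] at this
    rw [← h, neg_zero]
    exact this
  -- f v > 0
  have hSclosed : IsClosed S := by
    rw [← closure_subset_iff_isClosed]
    intro x hx
    have hxσ : x ∈ σ := hσcl.closure_subset (closure_mono (by intro z hz; exact hz.1) hx)
    refine ⟨hxσ, ?_⟩
    by_contra hgt
    push_neg at hgt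
    have hne' : (nhdsWithin x S).NeBot := mem_closure_iff_nhdsWithin_neBot.mp hx
    have hev : ∀ᶠ z in nhdsWithin x σ, 1 < f z := hlsc x hxσ 1 hgt
    have hev' : ∀ᶠ z in nhdsWithin x S, 1 < f z :=
      Filter.Eventually.filter_mono (nhdsWithin_mono x (fun z hz => hz.1)) hev
    have hevS : ∀ᶠ z in nhdsWithin x S, z ∈ S := self_mem_nhdsWithin
    have : ∀ᶠ z in nhdsWithin x S, False := by
      filter_upwards [hev', hevS] with z h1 h2
      exact absurd h2.2 (not_le.mpr h1)
    exact this.exists.choose_spec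
  have hSconv : Convex ℝ S := by
    intro x hx y hy a b ha hb hab
    refine ⟨hσconv hx.1 hy.1 ha hb hab, ?_⟩
    have h1 : f (a • x + b • y) ≤ f (a • x) + f (b • y) :=
      hsub _ (hσcone a ha x hx.1) _ (hσcone b hb y hy.1)
    rw [hhom a ha x hx.1, hhom b hb y hy.1] at h1
    nlinarith [hx.2, hy.2]
  refine le_of_forall_pos_le_add ?_
  intro ε hε
  set δ : ℝ := min ε (f v) / 2 with hδ
  have hδpos : 0 < δ := by positivity
  have hδε : δ ≤ ε := by
    have := min_le_left ε (f v); simp [hδ]; linarith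
  have hδf : δ < f v := by
    have := min_le_right ε (f v); simp [hδ]; linarith
  set c : ℝ := f v - δ with hc
  have hcpos : 0 < c := by simp [hc]; linarith
  set p : V := c⁻¹ • v with hp
  have hpσ : p ∈ σ := hσcone _ (by positivity) v hv
  have hfp : 1 < f p := by
    rw [hp, hhom _ (by positivity) v hv]
    have hlt : c < f v := by rw [hc]; linarith
    calc (1:ℝ) = c⁻¹ * c := (inv_mul_cancel₀ (ne_of_gt hcpos)).symm
      _ < c⁻¹ * f v := mul_lt_mul_of_pos_left hlt (by positivity)
  have hpS : p ∉ S := fun hmem => absurd hmem.2 (not_le.mpr hfp)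
  obtain ⟨g, b, hgS, hgp⟩ := geometric_hahn_banach_closed_point hSconv hSclosed hpS
  have hbpos : 0 < b := by
    have := hgS 0 h0S
    simpa using this
  set y : V := (InnerProductSpace.toDual ℝ V).symm g with hy
  have hyg : ∀ z : V, ⟪y, z⟫ = g z := fun z =>
    InnerProductSpace.toDual_symm_apply
  set u : V := -(b⁻¹ • y) with hu
  have huΔ : u ∈ Δ := by
    intro w hw
    rw [hu, inner_neg_left, real_inner_smul_left, hyg]
    have := hgS w hw
    have h1 : b⁻¹ * g w < 1 := by
      rw [← inv_mul_cancel₀ (ne_of_gt hbpos)]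
      exact mul_lt_mul_of_pos_left this (by positivity)
    linarith
  have hup : ⟪u, p⟫ < -1 := by
    rw [hu, inner_neg_left, real_inner_smul_left, hyg]
    have h1 : 1 < b⁻¹ * g p := by
      rw [← inv_mul_cancel₀ (ne_of_gt hbpos)]
      exact mul_lt_mul_of_pos_left hgp (by positivity)
    linarith
  have huv : ⟪u, v⟫ < -c := by
    rw [hp, real_inner_smul_right] at hup
    have h3 := mul_lt_mul_of_pos_left hup hcpos
    rw [← mul_assoc, mul_inv_cancel₀ (ne_of_gt hcpos), one_mul] at h3
    linarith
  have : sInf ((fun u => ⟪u, v⟫) '' Δ) ≤ ⟪u, v⟫ := csInf_le hbdd ⟨u, huΔ, rfl⟩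
  have : sInf ((fun u => ⟪u, v⟫) '' Δ) < -c := lt_of_le_of_lt this huv
  rw [hc] at this
  linarith
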